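/- arXiv:1210.0144 — 6 statements merged into one kernel-verified Lean document; each statement's English description precedes it below -/
import Mathlib

section
/- There exists ξ > √3·μ such that (ξ, 0) is an equilibrium point of the restricted four-body problem, i.e., ∂Ω/∂x(ξ,0) = 0 and ∂Ω/∂y(ξ,0) = 0 (this is the collinear equilibrium point L₂ lying on the positive x-axis beyond the primary m₁). -/
/-- Gravitational potential of the three primaries of the planar restricted four-body
problem with mass parameter `μ`: masses `1-2μ, μ, μ` at `(√3 μ, 0)`,
`(-√3(1-2μ)/2, -1/2)`, `(-√3(1-2μ)/2, 1/2)`. -/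
noncomputable def U (μ x y : ℝ) : ℝ :=
  (1 - 2*μ) / Real.sqrt ((x - Real.sqrt 3 * μ)^2 + y^2)
  + μ / Real.sqrt ((x + Real.sqrt 3 * (1 - 2*μ)/2)^2 + (y + 1/2)^2)
  + μ / Real.sqrt ((x + Real.sqrt 3 * (1 - 2*μ)/2)^2 + (y - 1/2)^2)

/-- Effective potential `Ω = (x²+y²)/2 + U`. -/
noncomputable def Omega (μ x y : ℝ) : ℝ := (x^2 + y^2)/2 + U μ x y

/-- Partial derivative `∂Ω/∂x`. -/
noncomputable def Omega_x (μ x y : ℝ) : ℝ := deriv (fun s => Omega μ s y) x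

/-- Partial derivative `∂Ω/∂y`. -/
noncomputable def Omega_y (μ x y : ℝ) : ℝ := deriv (fun s => Omega μ x s) y

/-- `(x,y)` is the position of one of the three primaries. -/
def isPrimary (μ x y : ℝ) : Prop :=
  (x = Real.sqrt 3 * μ ∧ y = 0) ∨
  (x = -(Real.sqrt 3 * (1 - 2*μ))/2 ∧ y = -(1/2)) ∨
  (x = -(Real.sqrt 3 * (1 - 2*μ))/2 ∧ y = 1/2)

private lemma deriv_even_zero {f : ℝ → ℝ} (h : ∀ s, f (-s) = f s) : deriv f 0 = 0 := by
  have h1 : deriv (fun s => f (-s)) 0 = -deriv f (-0) := deriv_comp_neg f 0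
  have h2 : (fun s => f (-s)) = f := funext h
  rw [h2, neg_zero] at h1
  linarith

/-- The model function equal to `Ω(·,0)` on `(a,∞)`. -/
private noncomputable def Fl (μ a b c s : ℝ) : ℝ :=
  s^2/2 + c/(s-a) + 2*μ/Real.sqrt ((s+b)^2+1/4)

/-- The derivative of `Fl`. -/
private noncomputable def gl (μ a b c x : ℝ) : ℝ :=
  x - c/(x-a)^2 - 2*μ*(x+b)/(((x+b)^2+1/4) * Real.sqrt ((x+b)^2+1/4))

private lemma Fl_hasDerivAt (μ a b c x : ℝ) (hx : a < x) :
    HasDerivAt (Fl μ a b c) (gl μ a b c x) x := by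
  have hxa : x - a ≠ 0 := sub_ne_zero.mpr (ne_of_gt hx)
  have hu : (0:ℝ) < (x+b)^2 + 1/4 := by positivity
  have hsu : (0:ℝ) < Real.sqrt ((x+b)^2 + 1/4) := Real.sqrt_pos.mpr hu
  have h1 : HasDerivAt (fun s : ℝ => s^2/2) x x := by
    have := (hasDerivAt_pow 2 x).div_const 2
    simpa using this
  have hs : HasDerivAt (fun s : ℝ => s - a) 1 x := (hasDerivAt_id x).sub_const a
  have h2 : HasDerivAt (fun s : ℝ => c/(s-a)) (c * (-(1/(x-a)^2))) x := by
    have := (hs.inv hxa).const_mul c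
    exact this.congr_deriv (by ring)
  have hus : HasDerivAt (fun s : ℝ => (s+b)^2+1/4) (2*(x+b)) x := by
    have := (((hasDerivAt_id x).add_const b).pow 2).add_const (1/4 : ℝ)
    simpa using this
  have hsq : HasDerivAt (fun s : ℝ => Real.sqrt ((s+b)^2+1/4))
      (2*(x+b) / (2 * Real.sqrt ((x+b)^2+1/4))) x := hus.sqrt (ne_of_gt hu)
  have h3 : HasDerivAt (fun s : ℝ => 2*μ/Real.sqrt ((s+b)^2+1/4))
      ((2*μ) * (-((2*(x+b) / (2 * Real.sqrt ((x+b)^2+1/4))) / (Real.sqrt ((x+b)^2+1/4))^2))) x := by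
    have := (hsq.inv (ne_of_gt hsu)).const_mul (2*μ)
    exact this.congr_deriv (by ring)
  have := (h1.add h2).add h3
  refine this.congr_deriv ?_
  have hsq2 : (Real.sqrt ((x+b)^2+1/4))^2 = (x+b)^2+1/4 := Real.sq_sqrt hu.le
  unfold gl
  rw [hsq2]
  field_simp
  ring

private lemma gl_root (μ a b c : ℝ) (hμ0 : 0 < μ) (hμ1 : μ < 1/2) (ha0 : 0 < a)
    (ha1 : a < 1) (hb0 : 0 < b) (hc0 : 0 < c) (hc1 : c ≤ 1) :
    ∃ ξ, a < ξ ∧ gl μ a b c ξ = 0 := by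
  set δ : ℝ := min 1 (Real.sqrt (c/2)) with hδdef
  have hδ0 : 0 < δ := lt_min one_pos (Real.sqrt_pos.mpr (by linarith))
  have hδ1 : δ ≤ 1 := min_le_left _ _
  have hδ2 : δ^2 ≤ c/2 := by
    have h := min_le_right (1:ℝ) (Real.sqrt (c/2))
    calc δ^2 ≤ (Real.sqrt (c/2))^2 := by
          apply pow_le_pow_left₀ hδ0.le h _
      _ = c/2 := Real.sq_sqrt (by linarith)
  set x₁ : ℝ := a + δ with hx₁
  set x₂ : ℝ := a + 2 with hx₂
  have hx12 : x₁ ≤ x₂ := by simp only [hx₁, hx₂]; linarith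
  have hax1 : a < x₁ := by simp only [hx₁]; linarith
  -- g x₁ ≤ 0
  have hg1 : gl μ a b c x₁ ≤ 0 := by
    have hd : x₁ - a = δ := by simp [hx₁]
    have hT : 0 ≤ 2*μ*(x₁+b)/(((x₁+b)^2+1/4) * Real.sqrt ((x₁+b)^2+1/4)) := by
      have : 0 < x₁ + b := by simp only [hx₁]; linarith
      positivity
    have hcd : (2:ℝ) ≤ c/δ^2 := by
      rw [le_div_iff₀ (by positivity)]
      linarith
    have : x₁ < c/δ^2 := by
      have : x₁ < 2 := by simp only [hx₁]; linarith
      linarith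
    unfold gl
    rw [hd]
    linarith
  -- g x₂ > 0
  have hg2 : 0 ≤ gl μ a b c x₂ := by
    have hd : x₂ - a = 2 := by simp [hx₂]
    set p : ℝ := x₂ + b with hp
    have hp2 : 2 < p := by simp only [hp, hx₂]; linarith
    have hp0 : 0 < p := by linarith
    have hu : (0:ℝ) < p^2 + 1/4 := by positivity
    have hsu : p ≤ Real.sqrt (p^2 + 1/4) := by
      have h := Real.sqrt_le_sqrt (show p^2 ≤ p^2 + 1/4 by linarith)
      rwa [Real.sqrt_sq hp0.le] at h
    have hT : 2*μ*p/((p^2+1/4) * Real.sqrt (p^2+1/4)) ≤ 2*μ/p^2 := by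
      rw [div_le_div_iff₀ (by positivity) (by positivity)]
      have h1 : p^2 * p ≤ (p^2+1/4) * Real.sqrt (p^2+1/4) := by
        apply mul_le_mul (by linarith) hsu hp0.le (by positivity)
      nlinarith [mul_pos hμ0 hp0]
    have hT2 : 2*μ/p^2 ≤ 1/4 := by
      rw [div_le_iff₀ (by positivity)]
      nlinarith
    have hC : c/(x₂-a)^2 ≤ 1/4 := by
      rw [hd]; nlinarith
    have : 2 ≤ x₂ := by simp only [hx₂]; linarith
    unfold gl
    rw [hd] at hC ⊢
    have := hT.trans hT2
    linarith
  -- continuity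
  have hcont : ContinuousOn (gl μ a b c) (Set.Icc x₁ x₂) := by
    intro x hx
    have hxa : a < x := lt_of_lt_of_le hax1 hx.1
    have h1 : ((x-a)^2 : ℝ) ≠ 0 := pow_ne_zero _ (sub_ne_zero.mpr (ne_of_gt hxa))
    have h2 : ((x+b)^2+1/4) * Real.sqrt ((x+b)^2+1/4) ≠ 0 := by positivity
    apply ContinuousAt.continuousWithinAt
    unfold gl
    fun_prop (disch := assumption)
  have h0mem : (0:ℝ) ∈ Set.Icc (gl μ a b c x₁) (gl μ a b c x₂) := ⟨hg1, hg2⟩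
  obtain ⟨ξ, hξmem, hξ⟩ := intermediate_value_Icc hx12 hcont h0mem
  exact ⟨ξ, lt_of_lt_of_le hax1 hξmem.1, hξ⟩

/-- There exists `ξ > √3 μ` such that `(ξ, 0)` is an equilibrium point of
the restricted four-body problem: `∂Ω/∂x(ξ,0) = 0` and `∂Ω/∂y(ξ,0) = 0` (the collinear
equilibrium point `L₂` on the positive x-axis beyond the primary `m₁`). -/
theorem stmt_6 (μ : ℝ) (hμ0 : 0 < μ) (hμ1 : μ < 1/2) :
    ∃ ξ : ℝ, Real.sqrt 3 * μ < ξ ∧ Omega_x μ ξ 0 = 0 ∧ Omega_y μ ξ 0 = 0 := by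
  have hs3 : (0:ℝ) < Real.sqrt 3 := Real.sqrt_pos.mpr (by norm_num)
  have hs32 : Real.sqrt 3 < 2 := by
    rw [show (2:ℝ) = Real.sqrt 4 by
      rw [show (4:ℝ) = 2^2 by norm_num, Real.sqrt_sq (by norm_num)]]
    exact Real.sqrt_lt_sqrt (by norm_num) (by norm_num)
  have hc0 : (0:ℝ) < 1 - 2*μ := by linarith
  obtain ⟨ξ, hξa, hgξ⟩ := gl_root μ (Real.sqrt 3 * μ) (Real.sqrt 3 * (1 - 2*μ)/2) (1 - 2*μ)
    hμ0 hμ1 (mul_pos hs3 hμ0) (by nlinarith) (by positivity) hc0 (by linarith)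
  refine ⟨ξ, hξa, ?_, ?_⟩
  · -- x-derivative
    have hev : (fun s => Omega μ s 0) =ᶠ[nhds ξ]
        Fl μ (Real.sqrt 3 * μ) (Real.sqrt 3 * (1 - 2*μ)/2) (1 - 2*μ) := by
      filter_upwards [Ioi_mem_nhds hξa] with s hs
      have hsa : 0 ≤ s - Real.sqrt 3 * μ := le_of_lt (sub_pos.mpr hs)
      simp only [Omega, U, Fl]
      rw [show (s - Real.sqrt 3 * μ)^2 + (0:ℝ)^2 = (s - Real.sqrt 3 * μ)^2 by ring,
        Real.sqrt_sq hsa,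
        show ((0:ℝ)+1/2)^2 = (1/4 : ℝ) by norm_num,
        show ((0:ℝ)-1/2)^2 = (1/4 : ℝ) by norm_num]
      ring
    have hd := (Fl_hasDerivAt μ (Real.sqrt 3 * μ) (Real.sqrt 3 * (1 - 2*μ)/2) (1 - 2*μ) ξ hξa).deriv
    rw [Omega_x, hev.deriv_eq, hd, hgξ]
  · -- y-derivative: evenness
    apply deriv_even_zero
    intro s
    simp only [Omega, U]
    rw [show (-s)^2 = s^2 by ring, show (-s + 1/2:ℝ)^2 = (s - 1/2)^2 by ring,
      show (-s - 1/2:ℝ)^2 = (s + 1/2)^2 by ring]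
    ring
end

section
/- Let a, b ∈ ℝ and ω ≠ 0 satisfy the resonance conditions a + b = 2 − 2ω² and ab + a + b + 1 = ω⁴ (so that the characteristic polynomial λ⁴+(2−a−b)λ²+(ab+a+b+1) equals (λ²+ω²)²). Let N = (1/(2ω²)) times the matrix with rows (0, −(ω²+2b+a−1), −(ω²+a−3), 0), (ω²+2a+b−1, 0, 0, −(ω²+b−3)), (−(a²−b+a(ω²−2)), 0, 0, −(ω²+2a+b−1)), (0, a−b(ω²+b−2), ω²+2b+a−1, 0). Then N² = 0. -/
/-- Under the resonance conditions `a + b = 2 - 2ω²` and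
`ab + a + b + 1 = ω⁴` (so the characteristic polynomial is `(λ² + ω²)²`), the nilpotent
part `N` of the decomposition `A = Σ + N` satisfies `N² = 0`. -/
theorem stmt_12 (a b ω : ℝ) (hω : ω ≠ 0)
    (hres1 : a + b = 2 - 2*ω^2) (hres2 : a*b + a + b + 1 = ω^4) :
    ((1/(2*ω^2)) •
        !![0, -(ω^2 + 2*b + a - 1), -(ω^2 + a - 3), 0;
           ω^2 + 2*a + b - 1, 0, 0, -(ω^2 + b - 3);
           -(a^2 - b + a*(ω^2 - 2)), 0, 0, -(ω^2 + 2*a + b - 1);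
           0, a - b*(ω^2 + b - 2), ω^2 + 2*b + a - 1, 0] : Matrix (Fin 4) (Fin 4) ℝ) *
    ((1/(2*ω^2)) •
        !![0, -(ω^2 + 2*b + a - 1), -(ω^2 + a - 3), 0;
           ω^2 + 2*a + b - 1, 0, 0, -(ω^2 + b - 3);
           -(a^2 - b + a*(ω^2 - 2)), 0, 0, -(ω^2 + 2*a + b - 1);
           0, a - b*(ω^2 + b - 2), ω^2 + 2*b + a - 1, 0]) = 0 := by
  set M : Matrix (Fin 4) (Fin 4) ℝ :=
    !![0, -(ω^2 + 2*b + a - 1), -(ω^2 + a - 3), 0;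
       ω^2 + 2*a + b - 1, 0, 0, -(ω^2 + b - 3);
       -(a^2 - b + a*(ω^2 - 2)), 0, 0, -(ω^2 + 2*a + b - 1);
       0, a - b*(ω^2 + b - 2), ω^2 + 2*b + a - 1, 0] with hM
  have hMM : M * M = 0 := by
    ext i j
    fin_cases i <;> fin_cases j <;>
      simp [hM, Matrix.mul_apply, Fin.sum_univ_four]
    · linear_combination ((1) + (-2)*b + (-4)*a + (1)*a^2)*hres1 + ((1) + (-1)*a)*hres2
    · linear_combination ((-4) + (2)*b + (2)*a)*hres1 + ((-2))*hres2
    · linear_combination ((1)*ω^4 + (-5)*b + (1)*b^2 + (-3)*a + (-1)*a*b)*hres1 + ((-1) + (2)*ω^2 + (1)*a)*hres2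
    · linear_combination ((4) + (-2)*b + (-2)*a)*hres1 + ((2))*hres2
    · linear_combination ((-1) + (1)*ω^4 + (-3)*b + (1)*b^2 + (-3)*a + (1)*a*b + (1)*a^2)*hres1 + ((-2) + (2)*ω^2)*hres2
    · linear_combination ((1) + (-2)*b + (-4)*a + (1)*a^2)*hres1 + ((1) + (-1)*a)*hres2
    · linear_combination ((1) + (-1)*ω^4 + (3)*b + (-1)*b^2 + (3)*a + (-1)*a*b + (-1)*a^2)*hres1 + ((2) + (-2)*ω^2)*hres2
    · linear_combination ((1)*ω^4 + (-5)*b + (1)*b^2 + (-3)*a + (-1)*a*b)*hres1 + ((-1) + (2)*ω^2 + (1)*a)*hres2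
  rw [Matrix.smul_mul, Matrix.mul_smul, hMM, smul_zero, smul_zero]
end

section
/- Let ω > 0 and let B be the 4×4 matrix with rows (0,−ω,0,0), (ω,0,0,0), (−1,0,0,−ω), (0,−1,ω,0) (the normal form with ε = −1), and let J₄ be the standard 4×4 symplectic matrix. Define the quadratic Hamiltonian H(z) = ½ zᵀ(−J₄B)z, so that the linear Hamiltonian vector field of H is ż = Bz. Then under the symplectic polar substitution z₁ = r cos θ, z₂ = r sin θ, z₃ = R cos θ − (Θ/r) sin θ, z₄ = R sin θ + (Θ/r) cos θ (with r ≠ 0), one has H = ωΘ + ½ r². -/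
/-- For the normal form `B` (case `ε = -1`) and the standard symplectic
matrix `J₄ = [[0, I₂], [-I₂, 0]]`, the quadratic Hamiltonian `H(z) = ½ zᵀ(-J₄B)z`
(whose linear Hamiltonian vector field is `ż = Bz`, i.e. `J₄·(-J₄B) = B`) becomes
`H = ωΘ + ½r²` in symplectic polar coordinates `z₁ = r cos θ`, `z₂ = r sin θ`,
`z₃ = R cos θ - (Θ/r) sin θ`, `z₄ = R sin θ + (Θ/r) cos θ` (for `r ≠ 0`). -/
theorem stmt_14 (ω : ℝ) (hω : 0 < ω)
    (B J : Matrix (Fin 4) (Fin 4) ℝ)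
    (hB : B = !![0, -ω, 0, 0; ω, 0, 0, 0; -1, 0, 0, -ω; 0, -1, ω, 0])
    (hJ : J = !![0, 0, 1, 0; 0, 0, 0, 1; -1, 0, 0, 0; 0, -1, 0, 0]) :
    J * (-(J * B)) = B ∧
    ∀ r θ R Θ : ℝ, r ≠ 0 →
      (1/2) * (dotProduct
        ![r * Real.cos θ, r * Real.sin θ,
          R * Real.cos θ - (Θ/r) * Real.sin θ,
          R * Real.sin θ + (Θ/r) * Real.cos θ]
        ((-(J * B)).mulVec
          ![r * Real.cos θ, r * Real.sin θ,
            R * Real.cos θ - (Θ/r) * Real.sin θ,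
            R * Real.sin θ + (Θ/r) * Real.cos θ])) = ω * Θ + (1/2) * r^2 := by
  subst hB hJ
  constructor
  · ext i j
    fin_cases i <;> fin_cases j <;>
      simp [Matrix.mul_apply, Fin.sum_univ_four, Matrix.vecHead, Matrix.vecTail]
  · intro r θ R Θ hr
    have hs := Real.sin_sq_add_cos_sq θ
    simp [dotProduct, Matrix.mulVec, Fin.sum_univ_four, Matrix.mul_apply, Matrix.vecHead, Matrix.vecTail]
    field_simp
    linear_combination (2*ω*Θ + r^2)*hs
end

section
/- Let ν₁, ν₂ ∈ ℝ and let B_ν be the 4×4 matrix with rows (0, −(1+ν₁), ν₂, 0), (1+ν₁, 0, 0, ν₂), (−1, 0, 0, −(1+ν₁)), (0, −1, 1+ν₁, 0). Then the characteristic polynomial of B_ν is P(λ) = λ⁴ + 2[(1+ν₁)² + ν₂]λ² + [(1+ν₁)² − ν₂]². -/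
open Polynomial

set_option maxHeartbeats 1000000 in
/-- The characteristic polynomial of the versal deformation `B_ν`, the
matrix with rows `(0, -(1+ν₁), ν₂, 0), (1+ν₁, 0, 0, ν₂), (-1, 0, 0, -(1+ν₁)),
(0, -1, 1+ν₁, 0)`, is `λ⁴ + 2[(1+ν₁)² + ν₂]λ² + [(1+ν₁)² - ν₂]²`. -/
theorem stmt_17 (ν₁ ν₂ : ℝ) :
    Matrix.charpoly (!![0, -(1+ν₁), ν₂, 0;
                        1+ν₁, 0, 0, ν₂;
                        -1, 0, 0, -(1+ν₁);
                        0, -1, 1+ν₁, 0]) =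
      X^4 + C (2*((1+ν₁)^2 + ν₂)) * X^2 + C (((1+ν₁)^2 - ν₂)^2) := by
  have h : Matrix.charmatrix (!![0, -(1+ν₁), ν₂, 0;
                        1+ν₁, 0, 0, ν₂;
                        -1, 0, 0, -(1+ν₁);
                        0, -1, 1+ν₁, 0]) =
      !![X, C (1+ν₁), -C ν₂, 0;
         -C (1+ν₁), X, 0, -C ν₂;
         C 1, 0, X, C (1+ν₁);
         0, C 1, -C (1+ν₁), X] := by
    ext i j
    fin_cases i <;> fin_cases j <;>
      simp [Matrix.charmatrix_apply, Matrix.one_apply]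
  rw [Matrix.charpoly, h, Matrix.det_succ_row_zero]
  simp [Fin.sum_univ_succ, Matrix.det_fin_three, Fin.succAbove]
  rw [show (C (2:ℝ) : ℝ[X]) = 2 from map_ofNat C 2]
  ring
end

section
/- Let a, b ∈ ℝ satisfy a+b+ab+1 ≥ 0 and 1/2 − (a+b)/4 + (1/2)√(a+b+ab+1) ≥ 0. Define ν₂ = 1/2 − (a+b)/4 − (1/2)√(a+b+ab+1) and ν₁ = √(1/2 − (a+b)/4 + (1/2)√(a+b+ab+1)) − 1. Then (1+ν₁)² = 1 − (a+b)/2 − ν₂, 2[(1+ν₁)² + ν₂] = 2 − a − b, and [(1+ν₁)² − ν₂]² = a + b + ab + 1; consequently the characteristic polynomial λ⁴ + 2[(1+ν₁)²+ν₂]λ² + [(1+ν₁)²−ν₂]² of the versal deformation B_ν coincides with the characteristic polynomial λ⁴ + (2−a−b)λ² + (ab+a+b+1) of the linearized restricted four-body problem at the collinear equilibrium. -/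
open Polynomial

/-- With `ν₂ = 1/2 - (a+b)/4 - ½√(a+b+ab+1)` and
`ν₁ = √(1/2 - (a+b)/4 + ½√(a+b+ab+1)) - 1`, one has `(1+ν₁)² = 1 - (a+b)/2 - ν₂`,
`2[(1+ν₁)² + ν₂] = 2 - a - b` and `[(1+ν₁)² - ν₂]² = a + b + ab + 1`; hence the
characteristic polynomial of the versal deformation `B_ν` coincides with that of the
linearized restricted four-body problem at the collinear equilibrium. -/
theorem stmt_18 (a b : ℝ)
    (h1 : 0 ≤ a + b + a*b + 1)
    (h2 : 0 ≤ 1/2 - (a+b)/4 + (1/2) * Real.sqrt (a + b + a*b + 1))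
    (ν₁ ν₂ : ℝ)
    (hν₂ : ν₂ = 1/2 - (a+b)/4 - (1/2) * Real.sqrt (a + b + a*b + 1))
    (hν₁ : ν₁ = Real.sqrt (1/2 - (a+b)/4 + (1/2) * Real.sqrt (a + b + a*b + 1)) - 1) :
    (1 + ν₁)^2 = 1 - (a+b)/2 - ν₂ ∧
    2 * ((1 + ν₁)^2 + ν₂) = 2 - a - b ∧
    ((1 + ν₁)^2 - ν₂)^2 = a + b + a*b + 1 ∧
    (X^4 + C (2*((1+ν₁)^2 + ν₂)) * X^2 + C (((1+ν₁)^2 - ν₂)^2) : ℝ[X]) =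
      X^4 + C (2 - a - b) * X^2 + C (a + b + a*b + 1) := by
  have h1ν : 1 + ν₁ = Real.sqrt (1/2 - (a+b)/4 + (1/2) * Real.sqrt (a + b + a*b + 1)) := by
    rw [hν₁]; ring
  have hs : (1 + ν₁)^2 = 1/2 - (a+b)/4 + (1/2) * Real.sqrt (a + b + a*b + 1) := by
    rw [h1ν, Real.sq_sqrt h2]
  have hq : Real.sqrt (a + b + a*b + 1) ^ 2 = a + b + a*b + 1 := Real.sq_sqrt h1
  have e1 : (1 + ν₁)^2 = 1 - (a+b)/2 - ν₂ := by rw [hs, hν₂]; ring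
  have e2 : 2 * ((1 + ν₁)^2 + ν₂) = 2 - a - b := by rw [hs, hν₂]; ring
  have e3 : ((1 + ν₁)^2 - ν₂)^2 = a + b + a*b + 1 := by
    rw [hs, hν₂]
    calc (1/2 - (a+b)/4 + (1/2) * Real.sqrt (a + b + a*b + 1) - (1/2 - (a+b)/4 - (1/2) * Real.sqrt (a + b + a*b + 1)))^2
        = Real.sqrt (a + b + a*b + 1) ^ 2 := by ring
      _ = a + b + a*b + 1 := hq
  exact ⟨e1, e2, e3, by rw [e2, e3]⟩
end

section
/- Let ν₁, ν₂ ∈ ℝ and write s = 1+ν₁. The quadratic η² + 2(s²+ν₂)η + (s²−ν₂)² (obtained from the characteristic polynomial λ⁴ + 2(s²+ν₂)λ² + (s²−ν₂)² of B_ν by setting η = λ²) has discriminant 16 s² ν₂, and for ν₂ ≥ 0 its roots are η± = −(s²+ν₂) ± 2|s|√ν₂. Consequently: if ν₂ > 0, s ≠ 0 and s² ≠ ν₂, then all eigenvalues of B_ν are purely imaginary and nonzero; and if ν₂ < 0 and s ≠ 0, then every eigenvalue of B_ν has nonzero real part. Thus the sign of the detuning parameter ν₂ determines whether the eigenvalues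 lie on or off the imaginary axis. -/
/-- Writing `s = 1 + ν₁`, the quadratic `η² + 2(s²+ν₂)η + (s²-ν₂)²`
(obtained from the characteristic polynomial of the versal deformation `B_ν` by
`η = λ²`) has discriminant `16s²ν₂`, and for `ν₂ ≥ 0` its roots are
`η± = -(s²+ν₂) ± 2|s|√ν₂`. Consequently, if `ν₂ > 0`, `s ≠ 0`, `s² ≠ ν₂`, every
eigenvalue of `B_ν` is purely imaginary and nonzero, while if `ν₂ < 0` and `s ≠ 0`,
every eigenvalue of `B_ν` has nonzero real part: the sign of the detuning parameter
`ν₂` decides whether the eigenvalues lie on or off the imaginary axis. -/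
theorem stmt_19 (ν₁ ν₂ : ℝ) (s : ℝ) (hs : s = 1 + ν₁)
    (Bν : Matrix (Fin 4) (Fin 4) ℝ)
    (hBν : Bν = !![0, -(1+ν₁), ν₂, 0;
                   1+ν₁, 0, 0, ν₂;
                   -1, 0, 0, -(1+ν₁);
                   0, -1, 1+ν₁, 0]) :
    (2*(s^2 + ν₂))^2 - 4*((s^2 - ν₂)^2) = 16 * s^2 * ν₂ ∧
    (0 ≤ ν₂ → ∀ η : ℝ, η^2 + 2*(s^2 + ν₂)*η + (s^2 - ν₂)^2 = 0 ↔
      η = -(s^2 + ν₂) + 2 * |s| * Real.sqrt ν₂ ∨ η = -(s^2 + ν₂) - 2 * |s| * Real.sqrt ν₂) ∧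
    (0 < ν₂ → s ≠ 0 → s^2 ≠ ν₂ →
      ∀ lam ∈ spectrum ℂ (Bν.map Complex.ofReal), lam.re = 0 ∧ lam ≠ 0) ∧
    (ν₂ < 0 → s ≠ 0 →
      ∀ lam ∈ spectrum ℂ (Bν.map Complex.ofReal), lam.re ≠ 0) := by
  -- Every spectral value satisfies the characteristic polynomial.
  have hchar : ∀ lam : ℂ, lam ∈ spectrum ℂ (Bν.map Complex.ofReal) →
      lam^4 + 2*((s:ℂ)^2+(ν₂:ℂ))*lam^2 + ((s:ℂ)^2-(ν₂:ℂ))^2 = 0 := by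
    intro lam hm
    have hdet : (algebraMap ℂ (Matrix (Fin 4) (Fin 4) ℂ) lam - Bν.map Complex.ofReal).det = 0 := by
      rw [spectrum.mem_iff] at hm
      by_contra hne
      exact hm ((Matrix.isUnit_iff_isUnit_det _).mpr (isUnit_iff_ne_zero.mpr hne))
    have hM : (algebraMap ℂ (Matrix (Fin 4) (Fin 4) ℂ) lam) - Bν.map Complex.ofReal =
        !![lam, (s:ℂ), -(ν₂:ℂ), 0; -(s:ℂ), lam, 0, -(ν₂:ℂ);
           1, 0, lam, (s:ℂ); 0, 1, -(s:ℂ), lam] := by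
      subst hBν hs
      ext i j
      fin_cases i <;> fin_cases j <;>
        simp [Matrix.algebraMap_matrix_apply, Matrix.map_apply] <;> push_cast <;> ring
    rw [hM] at hdet
    rw [← hdet]
    simp [Matrix.det_succ_row_zero, Fin.sum_univ_succ, Fin.succAbove]
    ring
  refine ⟨by ring, ?_, ?_, ?_⟩
  · -- the quadratic roots for ν₂ ≥ 0
    intro hν η
    have h1 : Real.sqrt ν₂ ^ 2 = ν₂ := Real.sq_sqrt hν
    have h2 : |s|^2 = s^2 := sq_abs s
    constructor
    · intro h
      have hf : (η - (-(s^2 + ν₂) + 2 * |s| * Real.sqrt ν₂)) *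
          (η - (-(s^2 + ν₂) - 2 * |s| * Real.sqrt ν₂)) = 0 := by
        linear_combination h - 4*|s|^2*h1 - 4*ν₂*h2
      rcases mul_eq_zero.mp hf with h | h
      · exact Or.inl (sub_eq_zero.mp h)
      · exact Or.inr (sub_eq_zero.mp h)
    · rintro (rfl | rfl)
      · linear_combination 4*|s|^2*h1 + 4*ν₂*h2
      · linear_combination 4*|s|^2*h1 + 4*ν₂*h2
  · -- ν₂ > 0 : purely imaginary nonzero eigenvalues
    intro hν hs0 hsn lam hm
    have heq := hchar lam hm
    have hre := congrArg Complex.re heq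
    have him := congrArg Complex.im heq
    simp [pow_succ, Complex.mul_re, Complex.mul_im, Complex.add_re, Complex.add_im,
      Complex.sub_re, Complex.sub_im] at hre him
    have hs2 : 0 < s^2 := by positivity
    constructor
    · by_contra hxne
      have hx2 : 0 < lam.re^2 := by positivity
      have h4 : lam.re * (lam.im * (lam.re^2 - lam.im^2 + (s^2+ν₂))) = 0 := by
        linear_combination him / 4
      rcases mul_eq_zero.mp h4 with h | h
      · exact hxne h
      rcases mul_eq_zero.mp h with h | h
      · rw [h] at hre
        ring_nf at hre
        nlinarith [hre, hx2, hν, hs2, sq_nonneg (s*s-ν₂), mul_pos hx2 hx2]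
      · nlinarith [hre, h, sq_nonneg (lam.re*lam.im), mul_pos hs2 hν]
    · rintro rfl
      have h0 : ((s:ℂ)^2-(ν₂:ℂ))^2 = 0 := by linear_combination heq
      have h1 : (s:ℂ)^2 = (ν₂:ℂ) := sub_eq_zero.mp (pow_eq_zero_iff two_ne_zero |>.mp h0)
      exact hsn (by exact_mod_cast h1)
  · -- ν₂ < 0 : eigenvalues off the imaginary axis
    intro hν hs0 lam hm hx
    have heq := hchar lam hm
    have hre := congrArg Complex.re heq
    simp [pow_succ, Complex.mul_re, Complex.mul_im, Complex.add_re, Complex.add_im,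
      Complex.sub_re, Complex.sub_im, hx] at hre
    have hs2 : 0 < s^2 := by positivity
    nlinarith [hre, sq_nonneg (lam.im^2 - (s^2+ν₂)), mul_pos hs2 (neg_pos.mpr hν)]
end
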